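/- Let 1/2 < α ≤ 1, ρ > 0 and r > 0 satisfy 2αρ/(2α−1) < r ≤ π. Then (α/√(2α−1)) · sin(ρ) < sin(r/2). -/

import Mathlib

open Real

/-- Concavity of `sin` on `[0, π]`: `a * sin x ≤ sin (a * x)` for `a ∈ [0,1]`. -/
lemma aux_concave_sin {a x : ℝ} (ha0 : 0 ≤ a) (ha1 : a ≤ 1) (hx0 : 0 ≤ x) (hx : x ≤ π) :
    a * Real.sin x ≤ Real.sin (a * x) := by
  have h := strictConcaveOn_sin_Icc.concaveOn.2 (Set.mem_Icc.2 ⟨hx0, hx⟩)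
      (Set.mem_Icc.2 ⟨le_refl (0:ℝ), Real.pi_pos.le⟩) ha0
      (by linarith : (0:ℝ) ≤ 1 - a) (by ring)
  simpa using h

lemma aux_sin_lower {s τ : ℝ} (hs0 : 0 ≤ s) (hs1 : s ≤ 1) (hτ0 : 0 ≤ τ) (hτ : τ ≤ π / 2) :
    (1 - s) * Real.sin τ ≤ Real.sin ((1 + s) * τ) := by
  have hπ := Real.pi_pos
  have hsinτ : 0 ≤ Real.sin τ := Real.sin_nonneg_of_nonneg_of_le_pi hτ0 (by linarith)
  rcases le_or_gt ((1 + s) * τ) (π / 2) with h | h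
  · have h1 : Real.sin τ ≤ Real.sin ((1 + s) * τ) :=
      Real.strictMonoOn_sin.monotoneOn ⟨by linarith, hτ⟩ ⟨by nlinarith, h⟩ (by nlinarith)
    nlinarith
  · rw [show Real.sin ((1 + s) * τ) = Real.sin (π - (1 + s) * τ) from (Real.sin_pi_sub _).symm]
    have h1 : (1 - s) * Real.sin τ ≤ Real.sin ((1 - s) * τ) :=
      aux_concave_sin (by linarith) (by linarith) hτ0 (by linarith)
    have h2 : Real.sin ((1 - s) * τ) ≤ Real.sin (π - (1 + s) * τ) :=
      Real.strictMonoOn_sin.monotoneOn ⟨by nlinarith, by nlinarith⟩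
        ⟨by nlinarith, by linarith⟩ (by nlinarith)
    linarith

/-- Key inequality: `sin (s τ)² ≤ s (2 - s) sin τ²`. -/
lemma aux_key {s τ : ℝ} (hs0 : 0 ≤ s) (hs1 : s ≤ 1) (hτ0 : 0 ≤ τ) (hτ : τ ≤ π / 2) :
    Real.sin (s * τ) ^ 2 ≤ s * (2 - s) * Real.sin τ ^ 2 := by
  have hπ := Real.pi_pos
  have hsinτ : 0 ≤ Real.sin τ := Real.sin_nonneg_of_nonneg_of_le_pi hτ0 (by linarith)
  -- product formula: sin²τ - sin²(sτ) = sin((1+s)τ) * sin((1-s)τ)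
  have hid : Real.sin τ ^ 2 - Real.sin (s * τ) ^ 2
      = Real.sin ((1 + s) * τ) * Real.sin ((1 - s) * τ) := by
    have e1 : (1 + s) * τ = τ + s * τ := by ring
    have e2 : (1 - s) * τ = τ - s * τ := by ring
    rw [e1, e2, Real.sin_add, Real.sin_sub]
    have p1 := Real.sin_sq_add_cos_sq τ
    have p2 := Real.sin_sq_add_cos_sq (s * τ)
    nlinarith [p1, p2]
  have hA : (1 - s) * Real.sin τ ≤ Real.sin ((1 + s) * τ) := aux_sin_lower hs0 hs1 hτ0 hτ
  have hB : (1 - s) * Real.sin τ ≤ Real.sin ((1 - s) * τ) :=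
    aux_concave_sin (by linarith) (by linarith) hτ0 (by linarith)
  have hnn : 0 ≤ (1 - s) * Real.sin τ := mul_nonneg (by linarith) hsinτ
  have hprod : ((1 - s) * Real.sin τ) * ((1 - s) * Real.sin τ)
      ≤ Real.sin ((1 + s) * τ) * Real.sin ((1 - s) * τ) :=
    mul_le_mul hA hB hnn (le_trans hnn hA)
  nlinarith [hprod, hid]

/-- If `1/2 < α ≤ 1`, `ρ > 0` and `2αρ/(2α−1) < r ≤ π`, then
`(α/√(2α−1)) · sin ρ < sin (r/2)`. -/
theorem estimated_ball_in_half_ball (α ρ r : ℝ) (hα1 : 1 / 2 < α) (hα2 : α ≤ 1)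
    (hρ : 0 < ρ) (h1 : 2 * α * ρ / (2 * α - 1) < r) (h2 : r ≤ Real.pi) :
    α / Real.sqrt (2 * α - 1) * Real.sin ρ < Real.sin (r / 2) := by
  have hπ := Real.pi_pos
  have hα0 : 0 < α := by linarith
  have h2a : 0 < 2 * α - 1 := by linarith
  set s : ℝ := (2 * α - 1) / α with hs_def
  set τ : ℝ := r / 2 with hτ_def
  have hs0 : 0 < s := div_pos h2a hα0
  have hs1 : s ≤ 1 := by rw [div_le_one hα0]; linarith
  have hr0 : 0 < r := lt_trans (by positivity) h1
  have hτ0 : 0 < τ := by positivity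
  have hτπ : τ ≤ π / 2 := by rw [hτ_def]; linarith
  -- ρ < s * τ
  have hρlt : ρ < s * τ := by
    have h1' : 2 * α * ρ < r * (2 * α - 1) := (div_lt_iff₀ h2a).mp h1
    rw [hs_def, hτ_def, div_mul_eq_mul_div, lt_div_iff₀ hα0]
    nlinarith
  have hsτ : s * τ ≤ τ := by nlinarith
  -- sin ρ < sin (s * τ)
  have hsin_lt : Real.sin ρ < Real.sin (s * τ) :=
    Real.strictMonoOn_sin ⟨by linarith, by linarith⟩
      ⟨by nlinarith, by linarith⟩ hρlt
  have hsqrt : 0 < Real.sqrt (2 * α - 1) := Real.sqrt_pos.mpr h2a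
  have hcoef : 0 < α / Real.sqrt (2 * α - 1) := by positivity
  have step1 : α / Real.sqrt (2 * α - 1) * Real.sin ρ
      < α / Real.sqrt (2 * α - 1) * Real.sin (s * τ) := by
    exact mul_lt_mul_of_pos_left hsin_lt hcoef
  have hsinτ : 0 ≤ Real.sin τ := Real.sin_nonneg_of_nonneg_of_le_pi hτ0.le (by linarith)
  have hsinsτ : 0 ≤ Real.sin (s * τ) :=
    Real.sin_nonneg_of_nonneg_of_le_pi (by positivity) (by nlinarith)
  -- key: α * sin (s τ) ≤ sqrt(2α-1) * sin τ
  have hkey : Real.sin (s * τ) ^ 2 ≤ s * (2 - s) * Real.sin τ ^ 2 :=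
    aux_key hs0.le hs1 hτ0.le hτπ
  have hs2 : s * (2 - s) = (2 * α - 1) / α ^ 2 := by
    rw [hs_def, eq_div_iff (by positivity : (α:ℝ)^2 ≠ 0)]; field_simp; ring
  have hsq : (α * Real.sin (s * τ)) ^ 2 ≤ (Real.sqrt (2 * α - 1) * Real.sin τ) ^ 2 := by
    have hsq2 : Real.sqrt (2 * α - 1) ^ 2 = 2 * α - 1 := Real.sq_sqrt h2a.le
    rw [mul_pow, mul_pow, hsq2]
    rw [hs2] at hkey
    have : Real.sin (s * τ) ^ 2 ≤ (2 * α - 1) / α ^ 2 * Real.sin τ ^ 2 := hkey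
    calc α ^ 2 * Real.sin (s * τ) ^ 2
        ≤ α ^ 2 * ((2 * α - 1) / α ^ 2 * Real.sin τ ^ 2) := by
          exact mul_le_mul_of_nonneg_left this (by positivity)
      _ = (2 * α - 1) * Real.sin τ ^ 2 := by field_simp
  have hle : α * Real.sin (s * τ) ≤ Real.sqrt (2 * α - 1) * Real.sin τ := by
    have ha : 0 ≤ α * Real.sin (s * τ) := mul_nonneg hα0.le hsinsτ
    have hb : 0 ≤ Real.sqrt (2 * α - 1) * Real.sin τ := mul_nonneg hsqrt.le hsinτ
    nlinarith
  have step2 : α / Real.sqrt (2 * α - 1) * Real.sin (s * τ) ≤ Real.sin τ := by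
    rw [div_mul_eq_mul_div, div_le_iff₀ hsqrt]
    calc α * Real.sin (s * τ) ≤ Real.sqrt (2 * α - 1) * Real.sin τ := hle
      _ = Real.sin τ * Real.sqrt (2 * α - 1) := by ring
  calc α / Real.sqrt (2 * α - 1) * Real.sin ρ
      < α / Real.sqrt (2 * α - 1) * Real.sin (s * τ) := step1
    _ ≤ Real.sin τ := step2
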